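/- Let p ≥ 1 be an integer, H > 0, β ∈ [0, 1/2), let x̄, T ∈ E, let g be a subgradient of ψ at T such that (T, g) ∈ A(x̄, β), and let x* ∈ E be a minimizer of F = f + ψ (i.e. F(x*) ≤ F(x) for all x ∈ E). Then ‖T − x*‖² ≤ ((1−β)²/(1−2β)) ‖x̄ − x*‖². In particular, if β ≤ 3/8, then ‖T − x*‖ ≤ (5/4) ‖x̄ − x*‖. -/

import Mathlib

open scoped RealInnerProductSpace

variable {E : Type*} [NormedAddCommGroup E] [InnerProductSpace ℝ E] [FiniteDimensional ℝ E]

/-- `g` is a subgradient of `ψ` at `T`. -/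
def IsSubgrad (ψ : E → ℝ) (T g : E) : Prop := ∀ y, ψ T + ⟪g, y - T⟫ ≤ ψ y

/-- `(T, g)` is an acceptable solution of the `p`-th order proximal-point problem at `xbar`,
i.e. `(T, g) ∈ A(xbar, β)`. -/
def InA (f' : E → E) (ψ : E → ℝ) (p : ℕ) (H β : ℝ) (xbar T g : E) : Prop :=
  IsSubgrad ψ T g ∧
    ‖f' T + g + (H * ‖T - xbar‖ ^ (p - 1)) • (T - xbar)‖ ≤ β * ‖f' T + g‖

lemma grad_ineq (f : E → ℝ) (hf : ConvexOn ℝ Set.univ f) {v T : E}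
    (h : HasGradientAt f v T) (y : E) : f T + ⟪v, y - T⟫ ≤ f y := by
  set c : ℝ → E := fun t => T + t • (y - T) with hc
  have hder : HasDerivAt c (y - T) 0 := by
    have h0 := ((hasDerivAt_id (0:ℝ)).smul_const (y - T)).const_add T
    simp only [one_smul] at h0
    exact h0
  have hF : HasFDerivAt f (InnerProductSpace.toDual ℝ E v) T :=
    (hasGradientAt_iff_hasFDerivAt).mp h
  have hcomp : HasDerivAt (f ∘ c) ⟪v, y - T⟫ 0 := by
    have hF' : HasFDerivAt f (InnerProductSpace.toDual ℝ E v) (c 0) := by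
      simpa [hc] using hF
    have := hF'.comp_hasDerivAt 0 hder
    simpa [InnerProductSpace.toDual_apply_apply] using this
  have hconv : ConvexOn ℝ Set.univ (f ∘ c) := by
    have : ConvexOn ℝ ((AffineMap.lineMap T y : ℝ →ᵃ[ℝ] E) ⁻¹' Set.univ)
        (f ∘ (AffineMap.lineMap T y : ℝ →ᵃ[ℝ] E)) := hf.comp_affineMap _
    have hce : c = fun t => (AffineMap.lineMap T y : ℝ →ᵃ[ℝ] E) t := by
      funext t; simp [hc, AffineMap.lineMap_apply]; abel
    rw [hce]
    simpa [Function.comp] using this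
  have := hconv.le_slope_of_hasDerivAt (Set.mem_univ (0:ℝ)) (Set.mem_univ (1:ℝ))
    one_pos hcomp
  rw [slope_def_field] at this
  simp only [hc, Function.comp] at this
  simp only [zero_smul, add_zero, one_smul, add_sub_cancel] at this
  linarith [this]


private lemma aux_c3 (L β a b d nv : ℝ)
    (c1 : (1 - β) * (L * (d ^ 2 + a ^ 2 - b ^ 2)) ≤ (1 - β) * (2 * (β * nv * a)))
    (c2 : (2 * β * a) * ((1 - β) * nv) ≤ (2 * β * a) * (L * d)) :
    L * ((1 - β) * (d ^ 2 + a ^ 2 - b ^ 2)) ≤ L * (2 * β * a * d) := by nlinarith [c1, c2]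

private lemma aux_key (β a b d : ℝ) (h1β : 0 < 1 - β)
    (e4 : (1 - β) * (d ^ 2 + a ^ 2 - b ^ 2) ≤ 2 * β * a * d) :
    (1 - 2 * β) * a ^ 2 ≤ (1 - β) ^ 2 * b ^ 2 := by
  nlinarith [sq_nonneg (β * a - (1 - β) * d), mul_le_mul_of_nonneg_left e4 h1β.le]

private lemma aux_zero (β a b : ℝ) (hab : a = b) :
    (1 - 2 * β) * a ^ 2 ≤ (1 - β) ^ 2 * b ^ 2 := by
  subst hab; nlinarith [sq_nonneg (β * a)]

private lemma aux_fin1 (β a b : ℝ) (h2β : 0 < 1 - 2 * β)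
    (key : (1 - 2 * β) * a ^ 2 ≤ (1 - β) ^ 2 * b ^ 2) :
    a ^ 2 ≤ (1 - β) ^ 2 / (1 - 2 * β) * b ^ 2 := by
  rw [div_mul_eq_mul_div, le_div_iff₀ h2β]; linarith

private lemma aux_fin2 (β a b : ℝ) (h0 : 0 ≤ β) (h38 : β ≤ 3 / 8) (h2β : 0 < 1 - 2 * β)
    (ha : 0 ≤ a) (hb : 0 ≤ b)
    (key : (1 - 2 * β) * a ^ 2 ≤ (1 - β) ^ 2 * b ^ 2) : a ≤ 5 / 4 * b := by
  have hco : (1 - β) ^ 2 * b ^ 2 ≤ (1 - 2 * β) * (25 / 16 * b ^ 2) := by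
    have h9 : 0 ≤ 9 - 18 * β - 16 * β ^ 2 := by
      nlinarith [mul_nonneg (by linarith : (0:ℝ) ≤ 3 - 8 * β) (by linarith : (0:ℝ) ≤ 2 * β + 3)]
    nlinarith [mul_nonneg h9 (sq_nonneg b)]
  have h3 : (1 - 2 * β) * a ^ 2 ≤ (1 - 2 * β) * (25 / 16 * b ^ 2) := le_trans key hco
  have h4 : a ^ 2 ≤ 25 / 16 * b ^ 2 := (mul_le_mul_iff_right₀ h2β).mp h3
  have h2 : a ^ 2 ≤ (5 / 4 * b) ^ 2 := by ring_nf; ring_nf at h4; linarith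
  exact (pow_le_pow_iff_left₀ ha (by positivity) two_ne_zero).mp h2

theorem stmt_5 (f ψ : E → ℝ) (f' : E → E)
    (hf : ConvexOn ℝ Set.univ f) (hψ : ConvexOn ℝ Set.univ ψ)
    (hf' : ∀ x, HasGradientAt f (f' x) x)
    (p : ℕ) (hp : 1 ≤ p) (H β : ℝ) (hH : 0 < H)
    (hβ : β ∈ Set.Ico (0 : ℝ) (1 / 2))
    (xbar T g : E) (hA : InA f' ψ p H β xbar T g)
    (xs : E) (hxs : ∀ x, f xs + ψ xs ≤ f x + ψ x) :
    ‖T - xs‖ ^ 2 ≤ ((1 - β) ^ 2 / (1 - 2 * β)) * ‖xbar - xs‖ ^ 2 ∧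
      (β ≤ 3 / 8 → ‖T - xs‖ ≤ (5 / 4) * ‖xbar - xs‖) := by
  obtain ⟨hβ0, hβhalf⟩ := hβ
  have h2β : 0 < 1 - 2 * β := by linarith
  have h1β : 0 < 1 - β := by linarith
  obtain ⟨hsub, hnorm⟩ := hA
  set a := ‖T - xs‖ with ha
  set b := ‖xbar - xs‖ with hb
  set d := ‖T - xbar‖ with hd
  set L := H * d ^ (p - 1) with hL
  set v := f' T + g with hv
  set s := v + L • (T - xbar) with hs
  have ha0 : 0 ≤ a := norm_nonneg _
  have hb0 : 0 ≤ b := norm_nonneg _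
  have hd0 : 0 ≤ d := norm_nonneg _
  have hv0 : 0 ≤ ‖v‖ := norm_nonneg _
  -- v is a subgradient direction: ⟪v, T - xs⟫ ≥ 0
  have hfg : f T + ⟪f' T, xs - T⟫ ≤ f xs := grad_ineq f hf (hf' T) xs
  have hψg : ψ T + ⟪g, xs - T⟫ ≤ ψ xs := hsub xs
  have hmin : f xs + ψ xs ≤ f T + ψ T := hxs T
  have hvinner : 0 ≤ ⟪v, T - xs⟫ := by
    have : ⟪v, xs - T⟫ = ⟪f' T, xs - T⟫ + ⟪g, xs - T⟫ := inner_add_left _ _ _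
    have h1 : ⟪v, xs - T⟫ ≤ 0 := by linarith
    have h2 : ⟪v, T - xs⟫ = -⟪v, xs - T⟫ := by
      rw [← inner_neg_right]; congr 1; abel
    linarith
  -- key inner bound
  have hkey1 : L * ⟪T - xbar, T - xs⟫ ≤ β * ‖v‖ * a := by
    have e1 : ⟪s, T - xs⟫ = ⟪v, T - xs⟫ + L * ⟪T - xbar, T - xs⟫ := by
      rw [hs, inner_add_left, real_inner_smul_left]
    have e2 : ⟪s, T - xs⟫ ≤ ‖s‖ * a := real_inner_le_norm _ _
    have e3 : ‖s‖ ≤ β * ‖v‖ := hnorm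
    have e4 : ‖s‖ * a ≤ β * ‖v‖ * a := mul_le_mul_of_nonneg_right e3 ha0
    linarith
  -- (1 - β) ‖v‖ ≤ L d
  have hkey2 : (1 - β) * ‖v‖ ≤ L * d := by
    have hL0 : 0 ≤ L := mul_nonneg hH.le (pow_nonneg hd0 _)
    have e1 : ‖v‖ ≤ ‖s‖ + ‖L • (T - xbar)‖ := by
      have : v = s - L • (T - xbar) := by rw [hs]; abel
      rw [this]; exact norm_sub_le _ _
    have e2 : ‖L • (T - xbar)‖ = L * d := by
      rw [norm_smul, Real.norm_eq_abs, abs_of_nonneg hL0]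
    have e3 : ‖s‖ ≤ β * ‖v‖ := hnorm
    linarith
  -- polarization
  have hpol : 2 * ⟪T - xbar, T - xs⟫ = d ^ 2 + a ^ 2 - b ^ 2 := by
    have e : xbar - xs = (T - xs) - (T - xbar) := by abel
    have := norm_sub_sq_real (T - xs) (T - xbar)
    rw [← e] at this
    rw [real_inner_comm]
    simp only [← ha, ← hb, ← hd] at this
    linarith
  clear_value a b d L v s
  -- main inequality
  have key : (1 - 2 * β) * a ^ 2 ≤ (1 - β) ^ 2 * b ^ 2 := by
    rcases eq_or_lt_of_le hd0 with hdz | hdpos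
    · -- d = 0 : T = xbar
      have hTx : T = xbar := by
        have : T - xbar = 0 := norm_eq_zero.mp (hd.symm.trans hdz.symm)
        exact sub_eq_zero.mp this
      have hab : a = b := by rw [ha, hb, hTx]
      exact aux_zero β a b hab
    · have hLpos : 0 < L := by rw [hL]; exact mul_pos hH (pow_pos hdpos _)
      -- (1-β)(d² + a² − b²) ≤ 2 β a d
      have e4 : (1 - β) * (d ^ 2 + a ^ 2 - b ^ 2) ≤ 2 * β * a * d := by
        have hLI : L * (d ^ 2 + a ^ 2 - b ^ 2) = 2 * (L * ⟪T - xbar, T - xs⟫) := by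
          rw [← hpol]; ring
        have hq : L * (d ^ 2 + a ^ 2 - b ^ 2) ≤ 2 * (β * ‖v‖ * a) := by linarith
        have c1 : (1 - β) * (L * (d ^ 2 + a ^ 2 - b ^ 2)) ≤ (1 - β) * (2 * (β * ‖v‖ * a)) :=
          mul_le_mul_of_nonneg_left hq h1β.le
        have c2 : (2 * β * a) * ((1 - β) * ‖v‖) ≤ (2 * β * a) * (L * d) :=
          mul_le_mul_of_nonneg_left hkey2 (by positivity)
        exact (mul_le_mul_iff_right₀ hLpos).mp (aux_c3 L β a b d ‖v‖ c1 c2)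
      exact aux_key β a b d h1β e4
  exact ⟨aux_fin1 β a b h2β key, fun h38 => aux_fin2 β a b hβ0 h38 h2β ha0 hb0 key⟩
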